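/- Semi-discrete energy conservation for the Maxwell-GLM scheme: let V, P, W, Q be finite-dimensional real inner product spaces and let C : W →ₗ[ℝ] V, G : P →ₗ[ℝ] V, H : Q →ₗ[ℝ] W be linear maps, with adjoints C*, G*, H*. Let B : ℝ → V, p : ℝ → P, E : ℝ → W, q : ℝ → Q have derivatives Bd, pd, Ed, qd (HasDerivAt at every t) satisfying for all t: Bd t = −(C (E t) + G (p t)); pd t = G* (B t); Ed t = C* (B t) + H (q t); qd t = −H* (E t). Then the total energy ‖B t‖² + ‖p t‖² + ‖E t‖² + ‖q t‖² is independent of t (equal to its value at t = 0). -/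

import Mathlib

/-- Semi-discrete energy conservation for the Maxwell-GLM scheme. -/
theorem maxwell_glm_semidiscrete_energy_conservation
    {V P W Q : Type*}
    [NormedAddCommGroup V] [InnerProductSpace ℝ V] [FiniteDimensional ℝ V]
    [NormedAddCommGroup P] [InnerProductSpace ℝ P] [FiniteDimensional ℝ P]
    [NormedAddCommGroup W] [InnerProductSpace ℝ W] [FiniteDimensional ℝ W]
    [NormedAddCommGroup Q] [InnerProductSpace ℝ Q] [FiniteDimensional ℝ Q]
    (C : W →ₗ[ℝ] V) (G : P →ₗ[ℝ] V) (H : Q →ₗ[ℝ] W)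
    (B : ℝ → V) (p : ℝ → P) (E : ℝ → W) (q : ℝ → Q)
    (Bd : ℝ → V) (pd : ℝ → P) (Ed : ℝ → W) (qd : ℝ → Q)
    (hB : ∀ t : ℝ, HasDerivAt B (Bd t) t)
    (hp : ∀ t : ℝ, HasDerivAt p (pd t) t)
    (hE : ∀ t : ℝ, HasDerivAt E (Ed t) t)
    (hq : ∀ t : ℝ, HasDerivAt q (qd t) t)
    (h1 : ∀ t : ℝ, Bd t = -(C (E t) + G (p t)))
    (h2 : ∀ t : ℝ, pd t = LinearMap.adjoint G (B t))
    (h3 : ∀ t : ℝ, Ed t = LinearMap.adjoint C (B t) + H (q t))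
    (h4 : ∀ t : ℝ, qd t = -(LinearMap.adjoint H (E t))) :
    ∀ t : ℝ,
      ‖B t‖ ^ 2 + ‖p t‖ ^ 2 + ‖E t‖ ^ 2 + ‖q t‖ ^ 2 =
      ‖B 0‖ ^ 2 + ‖p 0‖ ^ 2 + ‖E 0‖ ^ 2 + ‖q 0‖ ^ 2 := by
  set F : ℝ → ℝ := fun t =>
    inner ℝ (B t) (B t) + inner ℝ (p t) (p t) + inner ℝ (E t) (E t) + inner ℝ (q t) (q t) with hF
  have key : ∀ t : ℝ, HasDerivAt F 0 t := by
    intro t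
    have h : HasDerivAt F
        ((inner ℝ (B t) (Bd t) + inner ℝ (Bd t) (B t))
          + (inner ℝ (p t) (pd t) + inner ℝ (pd t) (p t))
          + (inner ℝ (E t) (Ed t) + inner ℝ (Ed t) (E t))
          + (inner ℝ (q t) (qd t) + inner ℝ (qd t) (q t))) t := by
      exact ((((hB t).inner ℝ (hB t)).add ((hp t).inner ℝ (hp t))).add
        ((hE t).inner ℝ (hE t))).add ((hq t).inner ℝ (hq t))
    convert h using 1
    simp only [h1, h2, h3, h4, inner_add_left, inner_add_right, inner_neg_left,
      inner_neg_right, LinearMap.adjoint_inner_left, LinearMap.adjoint_inner_right]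
    ring
  have hconst : ∀ t : ℝ, F t = F 0 := by
    intro t
    have := is_const_of_deriv_eq_zero (f := F)
      (fun s => (key s).differentiableAt) (fun s => (key s).deriv) t 0
    exact this
  intro t
  have ht := hconst t
  simp only [hF, real_inner_self_eq_norm_sq] at ht
  linarith
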